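/- Let u_0 ∈ H²(ℝ⁺), a < 0, |a| = −a, and for n ≥ 0 define u^{tr}_n := (1/Δt)∫_{t^n}^{t^{n+1}} u_0(|a| t) dt with t^n = nΔt. Then for all integers n ≥ 0 and 0 ≤ σ, σ' ≤ k, |u^{tr}_{n+σ+σ'} − u^{tr}_{n+σ'} − u^{tr}_{n+σ} + u^{tr}_n|² ≤ C Δt³ ∫_0^{(2k+1)Δt} u_0''(|a| t^n + |a| s)² ds, where C depends only on a and k. -/

import Mathlib

open MeasureTheory

/-- Cauchy–Schwarz for a set integral over `Ioc c d`. -/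
lemma cs_aux {f : ℝ → ℝ} (hm : AEStronglyMeasurable f volume)
    (hsq : Integrable (fun x => f x ^ 2) volume) {c d : ℝ} (hcd : c ≤ d) :
    (∫ x in Set.Ioc c d, f x) ^ 2 ≤ (d - c) * ∫ x in Set.Ioc c d, f x ^ 2 := by
  set μ := volume.restrict (Set.Ioc c d) with hμ
  have hμuniv : μ Set.univ = ENNReal.ofReal (d - c) := by
    rw [hμ, Measure.restrict_apply_univ, Real.volume_Ioc]
  haveI : IsFiniteMeasure μ := ⟨by rw [hμuniv]; exact ENNReal.ofReal_lt_top⟩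
  have hf2 : MemLp f (ENNReal.ofReal 2) μ := by
    rw [show ENNReal.ofReal (2:ℝ) = 2 by norm_num]
    exact ((memLp_two_iff_integrable_sq hm).mpr hsq).restrict _
  have h1 : MemLp (fun _ : ℝ => (1:ℝ)) (ENNReal.ofReal 2) μ := memLp_const 1
  have hpq : Real.HolderConjugate 2 2 := Real.HolderConjugate.two_two
  have key := integral_mul_norm_le_Lp_mul_Lq hpq h1 hf2
  have e1 : (∫ a, ‖(1:ℝ)‖ * ‖f a‖ ∂μ) = ∫ a, |f a| ∂μ := by
    simp [Real.norm_eq_abs]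
  have e2 : (∫ _ : ℝ, ‖(1:ℝ)‖ ^ (2:ℝ) ∂μ) = d - c := by
    simp only [norm_one, Real.one_rpow, integral_const, smul_eq_mul, mul_one, hμuniv]
    rw [measureReal_def, hμuniv]
    exact ENNReal.toReal_ofReal (by linarith)
  have e3 : (∫ a, ‖f a‖ ^ (2:ℝ) ∂μ) = ∫ a, f a ^ 2 ∂μ := by
    refine integral_congr_ae (Filter.Eventually.of_forall fun x => ?_)
    show ‖f x‖ ^ (2:ℝ) = f x ^ 2
    rw [Real.norm_eq_abs, show (2:ℝ) = ((2:ℕ):ℝ) by norm_num, Real.rpow_natCast, sq_abs]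
  rw [e1, e2, e3] at key
  have habs : |∫ x, f x ∂μ| ≤ Real.sqrt (d - c) * Real.sqrt (∫ a, f a ^ 2 ∂μ) := by
    calc |∫ x, f x ∂μ| ≤ ∫ x, |f x| ∂μ := by
          simpa [Real.norm_eq_abs] using norm_integral_le_integral_norm (μ := μ) f
      _ ≤ (d - c) ^ (1/(2:ℝ)) * (∫ a, f a ^ 2 ∂μ) ^ (1/(2:ℝ)) := key
      _ = Real.sqrt (d - c) * Real.sqrt (∫ a, f a ^ 2 ∂μ) := by
          rw [Real.sqrt_eq_rpow, Real.sqrt_eq_rpow]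
  have hInonneg : 0 ≤ ∫ a, f a ^ 2 ∂μ := integral_nonneg fun x => sq_nonneg _
  calc (∫ x in Set.Ioc c d, f x) ^ 2 = |∫ x, f x ∂μ| ^ 2 := by rw [sq_abs]
    _ ≤ (Real.sqrt (d - c) * Real.sqrt (∫ a, f a ^ 2 ∂μ)) ^ 2 :=
        pow_le_pow_left₀ (abs_nonneg _) habs 2
    _ = (d - c) * ∫ a, f a ^ 2 ∂μ := by
        rw [mul_pow, Real.sq_sqrt (by linarith), Real.sq_sqrt hInonneg]

set_option maxHeartbeats 1000000 in
/-- second-difference estimate for the time averages of the boundary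
trace: |u^tr_{n+σ+σ'} - u^tr_{n+σ'} - u^tr_{n+σ} + u^tr_n|² is bounded by
C Δt³ ∫_0^{(2k+1)Δt} u₀''(|a|t^n + |a|s)² ds, with C depending only on a and k. -/
theorem stmt15 (a : ℝ) (ha : a < 0) (k : ℕ) (hk : 1 ≤ k) :
    ∃ C > 0, ∀ (u₀ g h : ℝ → ℝ),
      (∀ x : ℝ, HasDerivAt u₀ (g x) x) →
      (∀ x : ℝ, HasDerivAt g (h x) x) →
      MeasureTheory.MemLp h 2 MeasureTheory.volume →
      ∀ Δt : ℝ, Δt ∈ Set.Ioc (0 : ℝ) 1 →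
        ∀ n σ σ' : ℕ, σ ≤ k → σ' ≤ k →
          (((1 / Δt) * ∫ t in (((n + σ + σ' : ℕ) : ℝ) * Δt)..(((n + σ + σ' : ℕ) : ℝ) + 1) * Δt,
              u₀ (|a| * t))
            - ((1 / Δt) * ∫ t in (((n + σ' : ℕ) : ℝ) * Δt)..(((n + σ' : ℕ) : ℝ) + 1) * Δt,
              u₀ (|a| * t))
            - ((1 / Δt) * ∫ t in (((n + σ : ℕ) : ℝ) * Δt)..(((n + σ : ℕ) : ℝ) + 1) * Δt,
              u₀ (|a| * t))
            + (1 / Δt) * ∫ t in ((n : ℝ) * Δt)..((n : ℝ) + 1) * Δt, u₀ (|a| * t)) ^ 2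
          ≤ C * Δt ^ 3 *
            ∫ s in (0 : ℝ)..((2 * k + 1 : ℕ) : ℝ) * Δt, (h (|a| * ((n : ℝ) * Δt) + |a| * s)) ^ 2 := by
  have ha0 : a ≠ 0 := ne_of_lt ha
  have hAa : (0:ℝ) < |a| := abs_pos.mpr ha0
  have hA4 : |a| ^ 4 = a ^ 4 := by rw [pow_abs, abs_of_nonneg (by positivity)]
  have ha4 : (0:ℝ) < a ^ 4 := hA4 ▸ pow_pos hAa 4
  have hk' : (0:ℝ) < (k:ℝ) := by exact_mod_cast Nat.lt_of_lt_of_le Nat.zero_lt_one hk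
  refine ⟨(k:ℝ)^3 * a^4, by positivity, ?_⟩
  intro u₀ g h hg hh hL2 Δt hΔt n σ σ' hσ hσ'
  obtain ⟨hΔ, hΔ1⟩ := hΔt
  set A := |a| with hAdef
  have hgd : Differentiable ℝ g := fun x => (hh x).differentiableAt
  have hgc : Continuous g := hgd.continuous
  have hu₀d : Differentiable ℝ u₀ := fun x => (hg x).differentiableAt
  have hu₀c : Continuous u₀ := hu₀d.continuous
  have hmeas : Measurable h := by
    have : h = deriv g := funext fun x => ((hh x).deriv).symm
    rw [this]; exact measurable_deriv g
  -- Memℒp of the rescaled second derivative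
  have hL2A : MemLp (fun z => h (A * z)) 2 volume := by
    have hmap : MemLp h 2 (Measure.map (A * ·) volume) := by
      rw [Real.map_volume_mul_left hAa.ne']
      exact hL2.smul_measure ENNReal.ofReal_ne_top
    exact (memLp_map_measure_iff hmeas.aestronglyMeasurable
      (measurable_const_mul A).aemeasurable).mp hmap
  have hH : MemLp (fun z => A^2 * h (A * z)) 2 volume := hL2A.const_mul (A^2)
  have hHsq : Integrable (fun z => (A^2 * h (A * z))^2) volume := hH.integrable_sq
  have hHint : ∀ c d : ℝ, IntervalIntegrable (fun z => A^2 * h (A*z)) volume c d := by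
    intro c d
    have hfin : IsFiniteMeasure (volume.restrict (Set.uIoc c d)) :=
      ⟨by rw [Measure.restrict_apply_univ, Set.uIoc]; exact measure_Ioc_lt_top⟩
    have : MemLp (fun z => A^2 * h (A*z)) 1 (volume.restrict (Set.uIoc c d)) :=
      (hH.restrict _).mono_exponent (by norm_num)
    rw [intervalIntegrable_iff]
    exact memLp_one_iff_integrable.mp this
  set tn : ℝ := (n:ℝ) * Δt with htn
  set p : ℝ := (σ:ℝ) * Δt with hp
  set q : ℝ := (σ':ℝ) * Δt with hq
  have hp0 : 0 ≤ p := by rw [hp]; positivity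
  have hq0 : 0 ≤ q := by rw [hq]; positivity
  have hpk : p ≤ (k:ℝ) * Δt := by
    rw [hp]; exact mul_le_mul_of_nonneg_right (by exact_mod_cast hσ) hΔ.le
  have hqk : q ≤ (k:ℝ) * Δt := by
    rw [hq]; exact mul_le_mul_of_nonneg_right (by exact_mod_cast hσ') hΔ.le
  set T : ℝ := ((2*k+1:ℕ):ℝ) * Δt with hT
  have hT' : T = (2*(k:ℝ)+1) * Δt := by rw [hT]; push_cast; ring
  have hT0 : 0 ≤ T := by rw [hT']; positivity
  set Bint := ∫ s in (0:ℝ)..T, (h (A * tn + A * s))^2 with hB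
  have hBint0 : 0 ≤ Bint := by
    rw [hB]; exact intervalIntegral.integral_nonneg hT0 (fun s _ => sq_nonneg _)
  -- the big H² integral equals a⁴ Bint
  have hBigB : (∫ z in tn..(tn + T), (A^2 * h (A*z))^2) = a^4 * Bint := by
    have e1 : ∀ z:ℝ, (A^2 * h (A*z))^2 = a^4 * (h (A*z))^2 := by
      intro z
      rw [mul_pow, ← pow_mul, (by norm_num : 2*2 = 4), hA4]
    have shift := intervalIntegral.integral_comp_add_left (a := (0:ℝ)) (b := T)
      (fun z => (h (A*z))^2) tn
    rw [add_zero] at shift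
    calc (∫ z in tn..(tn + T), (A^2 * h (A*z))^2)
        = ∫ z in tn..(tn + T), a^4 * (h (A*z))^2 := by simp_rw [e1]
      _ = a^4 * ∫ z in tn..(tn + T), (h (A*z))^2 := intervalIntegral.integral_const_mul _ _
      _ = a^4 * ∫ s in (0:ℝ)..T, (h (A*(tn+s)))^2 := by rw [shift]
      _ = a^4 * Bint := by rw [hB]; simp_rw [mul_add]
  set M : ℝ := Real.sqrt (q * (a^4 * Bint)) with hM
  have hM0 : 0 ≤ M := Real.sqrt_nonneg _
  -- bound on the inner difference of G
  have hEbound : ∀ y : ℝ, tn ≤ y → y + q ≤ tn + T →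
      |A * g (A*(y+q)) - A * g (A*y)| ≤ M := by
    intro y hy1 hy2
    have hyq : y ≤ y + q := le_add_of_nonneg_right hq0
    have hftc : A * g (A*(y+q)) - A * g (A*y) = ∫ z in y..(y+q), A^2 * h (A*z) := by
      have hd : ∀ z ∈ Set.uIcc y (y+q),
          HasDerivAt (fun w => A * g (A*w)) (A^2 * h (A*z)) z := by
        intro z _
        have h1 : HasDerivAt (fun w : ℝ => A * w) A z := by
          simpa using (hasDerivAt_id z).const_mul A
        have h2 := ((hh (A*z)).comp z h1).const_mul A
        exact h2.congr_deriv (by ring)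
      have := intervalIntegral.integral_eq_sub_of_hasDerivAt hd (hHint y (y+q))
      simpa using this.symm
    rw [hftc, intervalIntegral.integral_of_le hyq]
    have hcs := cs_aux (f := fun z => A^2 * h (A*z)) hH.aestronglyMeasurable hHsq hyq
    have hmono : (∫ z in Set.Ioc y (y+q), (A^2 * h (A*z))^2)
        ≤ ∫ z in Set.Ioc tn (tn+T), (A^2 * h (A*z))^2 :=
      setIntegral_mono_set hHsq.integrableOn
        (Filter.Eventually.of_forall fun z => sq_nonneg _)
        (Set.Ioc_subset_Ioc hy1 hy2).eventuallyLE
    have hIocBig : (∫ z in Set.Ioc tn (tn+T), (A^2 * h (A*z))^2) = a^4 * Bint := by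
      rw [← intervalIntegral.integral_of_le (by linarith : tn ≤ tn+T), hBigB]
    have habs : (∫ z in Set.Ioc y (y+q), A^2 * h (A*z))^2 ≤ q * (a^4 * Bint) := by
      calc (∫ z in Set.Ioc y (y+q), A^2 * h (A*z))^2
          ≤ (y + q - y) * ∫ z in Set.Ioc y (y+q), (A^2 * h (A*z))^2 := hcs
        _ = q * ∫ z in Set.Ioc y (y+q), (A^2 * h (A*z))^2 := by ring_nf
        _ ≤ q * (a^4 * Bint) := by
            rw [← hIocBig]; exact mul_le_mul_of_nonneg_left hmono hq0
    have := Real.sqrt_le_sqrt habs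
    rw [Real.sqrt_sq_eq_abs] at this
    rw [hM]
    exact this
  -- bound on the double difference
  have hDbound : ∀ x : ℝ, tn ≤ x → x ≤ tn + Δt →
      |u₀ (A*(x+(p+q))) - u₀ (A*(x+q)) - u₀ (A*(x+p)) + u₀ (A*x)| ≤ p * M := by
    intro x hx1 hx2
    have hxp : x ≤ x + p := le_add_of_nonneg_right hp0
    have hEc : Continuous (fun y : ℝ => A * g (A*(y+q)) - A * g (A*y)) := by
      fun_prop
    have hftc2 : u₀ (A*(x+(p+q))) - u₀ (A*(x+q)) - u₀ (A*(x+p)) + u₀ (A*x)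
        = ∫ y in x..(x+p), (A * g (A*(y+q)) - A * g (A*y)) := by
      have hd : ∀ y ∈ Set.uIcc x (x+p),
          HasDerivAt (fun w => u₀ (A*(w+q)) - u₀ (A*w))
            (A * g (A*(y+q)) - A * g (A*y)) y := by
        intro y _
        have h1 : HasDerivAt (fun w : ℝ => A*(w+q)) A y := by
          simpa using ((hasDerivAt_id y).add_const q).const_mul A
        have h2 : HasDerivAt (fun w : ℝ => A*w) A y := by
          simpa using (hasDerivAt_id y).const_mul A
        have h3 := ((hg (A*(y+q))).comp y h1).sub ((hg (A*y)).comp y h2)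
        exact h3.congr_deriv (by ring)
      have h5 := intervalIntegral.integral_eq_sub_of_hasDerivAt hd
        (hEc.intervalIntegrable x (x+p))
      rw [h5, show A*(x+(p+q)) = A*((x+p)+q) by ring]; ring
    rw [hftc2]
    have hb := intervalIntegral.norm_integral_le_of_norm_le_const
      (C := M) (f := fun y => A * g (A*(y+q)) - A * g (A*y)) (a := x) (b := x+p)
      (fun y hy => by
        rw [Set.uIoc_of_le hxp] at hy
        have hy1 : tn ≤ y := le_of_lt (lt_of_le_of_lt hx1 hy.1)
        have hy2 : y + q ≤ tn + T := by
          have := hy.2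
          rw [hT']
          nlinarith [hpk, hqk, hΔ.le]
        simpa [Real.norm_eq_abs] using hEbound y hy1 hy2)
    rw [Real.norm_eq_abs, add_sub_cancel_left, abs_of_nonneg hp0] at hb
    linarith [hb]
  -- bound on the outer integral
  have houter : |∫ x in tn..(tn+Δt),
      (u₀ (A*(x+(p+q))) - u₀ (A*(x+q)) - u₀ (A*(x+p)) + u₀ (A*x))| ≤ (p * M) * Δt := by
    have hb := intervalIntegral.norm_integral_le_of_norm_le_const
      (C := p * M)
      (f := fun x => u₀ (A*(x+(p+q))) - u₀ (A*(x+q)) - u₀ (A*(x+p)) + u₀ (A*x))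
      (a := tn) (b := tn+Δt)
      (fun x hx => by
        rw [Set.uIoc_of_le (le_add_of_nonneg_right hΔ.le)] at hx
        simpa [Real.norm_eq_abs] using hDbound x hx.1.le hx.2)
    rw [Real.norm_eq_abs, add_sub_cancel_left, abs_of_nonneg hΔ.le] at hb
    exact hb
  -- rewrite the LHS
  have hint4 : ∀ c : ℝ, IntervalIntegrable (fun x => u₀ (A*(x+c))) volume tn (tn+Δt) := by
    intro c
    exact (hu₀c.comp (by fun_prop)).intervalIntegrable _ _
  have hint0 : IntervalIntegrable (fun x => u₀ (A*x)) volume tn (tn+Δt) :=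
    (hu₀c.comp (by fun_prop)).intervalIntegrable _ _
  have e1 : (∫ t in (((n + σ + σ' : ℕ) : ℝ) * Δt)..((((n + σ + σ' : ℕ) : ℝ) + 1) * Δt),
      u₀ (A * t)) = ∫ x in tn..(tn+Δt), u₀ (A*(x+(p+q))) := by
    rw [intervalIntegral.integral_comp_add_right (fun t => u₀ (A*t)) (p+q)]
    congr 1 <;> (rw [htn, hp, hq] <;> push_cast <;> ring)
  have e2 : (∫ t in (((n + σ' : ℕ) : ℝ) * Δt)..((((n + σ' : ℕ) : ℝ) + 1) * Δt),
      u₀ (A * t)) = ∫ x in tn..(tn+Δt), u₀ (A*(x+q)) := by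
    rw [intervalIntegral.integral_comp_add_right (fun t => u₀ (A*t)) q]
    congr 1 <;> (rw [htn, hq] <;> push_cast <;> ring)
  have e3 : (∫ t in (((n + σ : ℕ) : ℝ) * Δt)..((((n + σ : ℕ) : ℝ) + 1) * Δt),
      u₀ (A * t)) = ∫ x in tn..(tn+Δt), u₀ (A*(x+p)) := by
    rw [intervalIntegral.integral_comp_add_right (fun t => u₀ (A*t)) p]
    congr 1 <;> (rw [htn, hp] <;> push_cast <;> ring)
  have e4 : (∫ t in tn..(((n:ℝ) + 1) * Δt), u₀ (A * t))
      = ∫ x in tn..(tn+Δt), u₀ (A*x) := by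
    congr 1
    rw [htn]; ring
  have hcomb : (∫ x in tn..(tn+Δt),
      (u₀ (A*(x+(p+q))) - u₀ (A*(x+q)) - u₀ (A*(x+p)) + u₀ (A*x)))
      = (∫ x in tn..(tn+Δt), u₀ (A*(x+(p+q)))) - (∫ x in tn..(tn+Δt), u₀ (A*(x+q)))
        - (∫ x in tn..(tn+Δt), u₀ (A*(x+p))) + ∫ x in tn..(tn+Δt), u₀ (A*x) := by
    rw [intervalIntegral.integral_add (((hint4 (p+q)).sub (hint4 q)).sub (hint4 p)) hint0,
      intervalIntegral.integral_sub ((hint4 (p+q)).sub (hint4 q)) (hint4 p),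
      intervalIntegral.integral_sub (hint4 (p+q)) (hint4 q)]
  rw [e1, e2, e3, e4]
  have hfactor : ∀ x1 x2 x3 x4 : ℝ,
      1/Δt*x1 - 1/Δt*x2 - 1/Δt*x3 + 1/Δt*x4 = 1/Δt*(x1 - x2 - x3 + x4) := by intros; ring
  rw [hfactor, ← hcomb]
  -- now finish
  have hI2 : (∫ x in tn..(tn+Δt),
      (u₀ (A*(x+(p+q))) - u₀ (A*(x+q)) - u₀ (A*(x+p)) + u₀ (A*x)))^2 ≤ ((p*M)*Δt)^2 := by
    rw [← sq_abs]
    exact pow_le_pow_left₀ (abs_nonneg _) houter 2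
  have hM2 : M^2 = q * (a^4 * Bint) := Real.sq_sqrt (by positivity)
  have step1 : ((1/Δt) * ∫ x in tn..(tn+Δt),
      (u₀ (A*(x+(p+q))) - u₀ (A*(x+q)) - u₀ (A*(x+p)) + u₀ (A*x)))^2
      ≤ p^2 * q * (a^4 * Bint) := by
    have : ((1/Δt) * ∫ x in tn..(tn+Δt),
        (u₀ (A*(x+(p+q))) - u₀ (A*(x+q)) - u₀ (A*(x+p)) + u₀ (A*x)))^2
        = (1/Δt)^2 * (∫ x in tn..(tn+Δt),
        (u₀ (A*(x+(p+q))) - u₀ (A*(x+q)) - u₀ (A*(x+p)) + u₀ (A*x)))^2 := by ring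
    rw [this]
    calc (1/Δt)^2 * (∫ x in tn..(tn+Δt),
        (u₀ (A*(x+(p+q))) - u₀ (A*(x+q)) - u₀ (A*(x+p)) + u₀ (A*x)))^2
        ≤ (1/Δt)^2 * ((p*M)*Δt)^2 := by
          exact mul_le_mul_of_nonneg_left hI2 (by positivity)
      _ = p^2 * M^2 := by field_simp
      _ = p^2 * q * (a^4 * Bint) := by rw [hM2]; ring
  refine le_trans step1 ?_
  have hfinal : p^2 * q ≤ ((k:ℝ)*Δt)^2 * ((k:ℝ)*Δt) :=
    mul_le_mul (pow_le_pow_left₀ hp0 hpk 2) hqk hq0 (by positivity)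
  calc p^2 * q * (a^4 * Bint) ≤ (((k:ℝ)*Δt)^2 * ((k:ℝ)*Δt)) * (a^4 * Bint) :=
        mul_le_mul_of_nonneg_right hfinal (by positivity)
    _ = (k:ℝ)^3 * a^4 * Δt^3 * Bint := by ring
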